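/- Let k ≥ 2 and let P_π be a weighted poset on {1,…,2^k}. The extended binary Hamming code H̃_k is a 2-packing P_π-code if and only if for every codeword c of H̃_k with w_{P_π}(c) = 4 and every partition of the support of c into two subsets x and y each of Hamming weight 2, either w_{P_π}(x) ≥ 3 or w_{P_π}(y) ≥ 3. -/

import Mathlib

open Classical

noncomputable def wtP {α : Type*} [Fintype α] (le : α → α → Prop) (π : α → ℕ)
    (x : α → ZMod 2) : ℕ :=
  ∑ j ∈ Finset.univ.filter (fun j => ∃ i, x i ≠ 0 ∧ le j i), π j

noncomputable def dP {α : Type*} [Fintype α] (le : α → α → Prop) (π : α → ℕ)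
    (x y : α → ZMod 2) : ℕ :=
  wtP le π (x - y)

def IsPacking {β : Type*} (d : β → β → ℕ) (C : Set β) (r : ℕ) : Prop :=
  ∀ c₁ ∈ C, ∀ c₂ ∈ C, c₁ ≠ c₂ → ∀ x, ¬(d c₁ x ≤ r ∧ d c₂ x ≤ r)

def extHamming (k : ℕ) : Set (Fin (2 ^ k) → ZMod 2) :=
  {x | (∑ i, x i) = 0 ∧
    ∀ j < k, (∑ i ∈ Finset.univ.filter (fun i : Fin (2 ^ k) => Nat.testBit i.val j), x i) = 0}

noncomputable def wH {α : Type*} [Fintype α] (x : α → ZMod 2) : ℕ :=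
  (Finset.univ.filter (fun i => x i ≠ 0)).card

lemma zmod2_cases : ∀ z : ZMod 2, z = 0 ∨ z = 1 := by decide

lemma extHamming_zero (k : ℕ) : (0 : Fin (2 ^ k) → ZMod 2) ∈ extHamming k := by
  constructor <;> simp [extHamming]

lemma extHamming_add {k : ℕ} {a b : Fin (2 ^ k) → ZMod 2}
    (ha : a ∈ extHamming k) (hb : b ∈ extHamming k) : a + b ∈ extHamming k := by
  refine ⟨?_, fun j hj => ?_⟩
  · simp only [Pi.add_apply, Finset.sum_add_distrib, ha.1, hb.1, add_zero]
  · simp only [Pi.add_apply, Finset.sum_add_distrib, ha.2 j hj, hb.2 j hj, add_zero]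

lemma supp_card_le_wtP {k : ℕ} (le : Fin (2 ^ k) → Fin (2 ^ k) → Prop)
    (hrefl : ∀ i, le i i) (π : Fin (2 ^ k) → ℕ) (hπ : ∀ i, 0 < π i)
    (x : Fin (2 ^ k) → ZMod 2) : wH x ≤ wtP le π x := by
  have hsub : Finset.univ.filter (fun i => x i ≠ 0) ⊆
      Finset.univ.filter (fun j => ∃ i, x i ≠ 0 ∧ le j i) := by
    intro j hj
    simp only [Finset.mem_filter, Finset.mem_univ, true_and] at *
    exact ⟨j, hj, hrefl j⟩
  calc wH x ≤ (Finset.univ.filter (fun j => ∃ i, x i ≠ 0 ∧ le j i)).card :=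
        Finset.card_le_card hsub
    _ ≤ wtP le π x := by
        rw [Finset.card_eq_sum_ones]
        exact le_of_le_of_eq (Finset.sum_le_sum (f := fun _ => 1) (g := π) fun i _ => hπ i)
          (by rw [wtP]; exact Finset.sum_congr (by ext; simp) (fun _ _ => rfl))

lemma wH_even {k : ℕ} {c : Fin (2 ^ k) → ZMod 2} (hc : c ∈ extHamming k) :
    2 ∣ wH c := by
  have h1 : (∑ i, c i) = ∑ i ∈ Finset.univ.filter (fun i => c i ≠ 0), c i :=
    (Finset.sum_filter_ne_zero _).symm
  have h2 : ∀ i ∈ Finset.univ.filter (fun i => c i ≠ 0), c i = 1 := by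
    intro i hi
    simp only [Finset.mem_filter] at hi
    rcases zmod2_cases (c i) with h | h
    · exact absurd h hi.2
    · exact h
  rw [Finset.sum_congr rfl h2, Finset.sum_const, nsmul_eq_mul, mul_one] at h1
  have : ((wH c : ℕ) : ZMod 2) = 0 := by rw [wH, ← h1]; exact hc.1
  exact (ZMod.natCast_eq_zero_iff _ _).mp this

lemma zmod2_sub_add : ∀ a b e : ZMod 2, (a - e) + (b - e) = a + b := by decide

lemma zmod2_add_eq_zero : ∀ a b : ZMod 2, a + b = 0 → a = b := by decide

lemma zmod2_zero_sub : ∀ a : ZMod 2, 0 - a = a := by decide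

lemma extHamming_min_wH {k : ℕ} {c : Fin (2 ^ k) → ZMod 2}
    (hc : c ∈ extHamming k) (hne : c ≠ 0) : 4 ≤ wH c := by
  have heven := wH_even hc
  have hpos : wH c ≠ 0 := by
    intro h
    apply hne
    funext i
    by_contra hi
    have : i ∈ Finset.univ.filter (fun i => c i ≠ 0) := by
      simp only [Finset.mem_filter, Finset.mem_univ, true_and]
      intro h'; exact hi (by rw [h']; rfl)
    rw [Finset.card_eq_zero.mp h] at this
    exact absurd this (Finset.notMem_empty i)
  have hne2 : wH c ≠ 2 := by
    intro h2
    obtain ⟨a, b, hab, hs⟩ := Finset.card_eq_two.mp h2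
    have hca : c a = 1 := by
      have : a ∈ Finset.univ.filter (fun i => c i ≠ 0) := by rw [hs]; simp
      simp only [Finset.mem_filter] at this
      rcases zmod2_cases (c a) with h | h
      · exact absurd h this.2
      · exact h
    have hcb : c b = 1 := by
      have : b ∈ Finset.univ.filter (fun i => c i ≠ 0) := by rw [hs]; simp
      simp only [Finset.mem_filter] at this
      rcases zmod2_cases (c b) with h | h
      · exact absurd h this.2
      · exact h
    have hcform : ∀ i, c i = (if i = a then 1 else 0) + (if i = b then 1 else 0) := by
      intro i
      by_cases hia : i = a
      · subst hia
        simp [hab, hca]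
      · by_cases hib : i = b
        · subst hib
          simp [hia, hcb]
        · have : c i = 0 := by
            by_contra hi
            have : i ∈ Finset.univ.filter (fun i => c i ≠ 0) := by
              simp only [Finset.mem_filter, Finset.mem_univ, true_and]; exact hi
            rw [hs] at this
            simp only [Finset.mem_insert, Finset.mem_singleton] at this
            tauto
          simp [hia, hib, this]
    have hbit : ∀ j, Nat.testBit a.val j = Nat.testBit b.val j := by
      intro j
      by_cases hj : j < k
      · have := hc.2 j hj
        rw [Finset.sum_congr rfl (fun i _ => hcform i)] at this
        rw [Finset.sum_add_distrib, Finset.sum_ite_eq' _ a (fun _ => (1 : ZMod 2)),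
          Finset.sum_ite_eq' _ b (fun _ => (1 : ZMod 2))] at this
        simp only [Finset.mem_filter, Finset.mem_univ, true_and] at this
        by_cases ha' : Nat.testBit a.val j <;> by_cases hb' : Nat.testBit b.val j <;>
          simp_all
      · push_neg at hj
        have hak : a.val < 2 ^ j := lt_of_lt_of_le a.isLt (Nat.pow_le_pow_right (by norm_num) hj)
        have hbk : b.val < 2 ^ j := lt_of_lt_of_le b.isLt (Nat.pow_le_pow_right (by norm_num) hj)
        rw [Nat.testBit_lt_two_pow hak, Nat.testBit_lt_two_pow hbk]
    exact hab (Fin.ext (Nat.eq_of_testBit_eq hbit))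
  omega

theorem stmt_10 {k : ℕ} (hk : 2 ≤ k)
    (le : Fin (2 ^ k) → Fin (2 ^ k) → Prop)
    (hrefl : ∀ i, le i i)
    (hantisymm : ∀ i j, le i j → le j i → i = j)
    (htrans : ∀ i j l, le i j → le j l → le i l)
    (π : Fin (2 ^ k) → ℕ) (hπ : ∀ i, 0 < π i) :
    IsPacking (dP le π) (extHamming k) 2 ↔
      ∀ c ∈ extHamming k, wtP le π c = 4 →
        ∀ x y : Fin (2 ^ k) → ZMod 2,
          (∀ i, x i = 0 ∨ y i = 0) → x + y = c → wH x = 2 → wH y = 2 →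
          3 ≤ wtP le π x ∨ 3 ≤ wtP le π y := by
  constructor
  · -- packing → condition
    intro hpack c hc hc4 x y hdisj hxy hx2 hy2
    by_contra hcon
    push_neg at hcon
    obtain ⟨hx3, hy3⟩ := hcon
    have hc0 : (0 : Fin (2 ^ k) → ZMod 2) ≠ c := by
      intro h
      rw [← h] at hc4
      have h0 : wtP le π (0 : Fin (2 ^ k) → ZMod 2) = 0 := by
        simp [wtP]
      omega
    refine hpack 0 (extHamming_zero k) c hc hc0 x ⟨?_, ?_⟩
    · have h0x : (0 : Fin (2 ^ k) → ZMod 2) - x = x := by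
        funext i; exact zmod2_zero_sub (x i)
      show wtP le π ((0 : Fin (2 ^ k) → ZMod 2) - x) ≤ 2
      rw [h0x]; omega
    · have hcx : c - x = y := by rw [← hxy]; exact add_sub_cancel_left x y
      show wtP le π (c - x) ≤ 2
      rw [hcx]; omega
  · -- condition → packing
    intro hcond c₁ h₁ c₂ h₂ hne z hz
    obtain ⟨hd1, hd2⟩ := hz
    set u := c₁ - z with hu
    set v := c₂ - z with hv
    set c := u + v with hcdef
    have huv : c = c₁ + c₂ := by
      funext i
      exact zmod2_sub_add (c₁ i) (c₂ i) (z i)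
    have hc : c ∈ extHamming k := by rw [huv]; exact extHamming_add h₁ h₂
    have hcne : c ≠ 0 := by
      intro h0
      apply hne
      funext i
      have : c₁ i + c₂ i = 0 := by
        have := congrFun (h0 ▸ huv : (0 : Fin (2 ^ k) → ZMod 2) = c₁ + c₂) i
        exact this.symm
      exact zmod2_add_eq_zero _ _ this
    have hwu2 : wtP le π u ≤ 2 := hd1
    have hwv2 : wtP le π v ≤ 2 := hd2
    -- finsets
    have hsub : (Finset.univ.filter fun j => ∃ i, c i ≠ 0 ∧ le j i) ⊆
        (Finset.univ.filter fun j => ∃ i, u i ≠ 0 ∧ le j i) ∪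
        (Finset.univ.filter fun j => ∃ i, v i ≠ 0 ∧ le j i) := by
      intro j hj
      simp only [Finset.mem_filter, Finset.mem_union, Finset.mem_univ, true_and] at *
      obtain ⟨i, hi, hle⟩ := hj
      have : u i ≠ 0 ∨ v i ≠ 0 := by
        by_contra h; push_neg at h
        apply hi
        show u i + v i = 0
        rw [h.1, h.2, add_zero]
      rcases this with h | h
      · exact Or.inl ⟨i, h, hle⟩
      · exact Or.inr ⟨i, h, hle⟩
    have hui := Finset.sum_union_inter (s₁ := Finset.univ.filter fun j => ∃ i, u i ≠ 0 ∧ le j i)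
      (s₂ := Finset.univ.filter fun j => ∃ i, v i ≠ 0 ∧ le j i) (f := π)
    have hcge : 4 ≤ wtP le π c :=
      le_trans (extHamming_min_wH hc hcne) (supp_card_le_wtP le hrefl π hπ c)
    have hcle : wtP le π c ≤ ∑ j ∈ ((Finset.univ.filter fun j => ∃ i, u i ≠ 0 ∧ le j i) ∪
        (Finset.univ.filter fun j => ∃ i, v i ≠ 0 ∧ le j i)), π j :=
      by
        have e : wtP le π c = ∑ j ∈ (Finset.univ.filter fun j => ∃ i, c i ≠ 0 ∧ le j i), π j := by
          rw [wtP]; exact Finset.sum_congr (by ext; simp) (fun _ _ => rfl)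
        rw [e]; exact Finset.sum_le_sum_of_subset hsub
    have hinter0 : ∑ j ∈ ((Finset.univ.filter fun j => ∃ i, u i ≠ 0 ∧ le j i) ∩
        (Finset.univ.filter fun j => ∃ i, v i ≠ 0 ∧ le j i)), π j = 0 := by
      have : wtP le π u = ∑ j ∈ (Finset.univ.filter fun j => ∃ i, u i ≠ 0 ∧ le j i), π j := by rw [wtP]; exact Finset.sum_congr (by ext; simp) (fun _ _ => rfl)
      have : wtP le π v = ∑ j ∈ (Finset.univ.filter fun j => ∃ i, v i ≠ 0 ∧ le j i), π j := by rw [wtP]; exact Finset.sum_congr (by ext; simp) (fun _ _ => rfl)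
      omega
    have hwtu : wtP le π u = 2 ∧ wtP le π v = 2 ∧ wtP le π c = 4 := by
      have h1 : wtP le π u = ∑ j ∈ (Finset.univ.filter fun j => ∃ i, u i ≠ 0 ∧ le j i), π j := by rw [wtP]; exact Finset.sum_congr (by ext; simp) (fun _ _ => rfl)
      have h2 : wtP le π v = ∑ j ∈ (Finset.univ.filter fun j => ∃ i, v i ≠ 0 ∧ le j i), π j := by rw [wtP]; exact Finset.sum_congr (by ext; simp) (fun _ _ => rfl)
      have hwHu := supp_card_le_wtP le hrefl π hπ u
      have hwHv := supp_card_le_wtP le hrefl π hπ v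
      omega
    -- disjoint supports
    have hdisj : ∀ i, u i = 0 ∨ v i = 0 := by
      intro i
      by_contra h; push_neg at h
      have hi : i ∈ ((Finset.univ.filter fun j => ∃ i, u i ≠ 0 ∧ le j i) ∩
          (Finset.univ.filter fun j => ∃ i, v i ≠ 0 ∧ le j i)) := by
        simp only [Finset.mem_inter, Finset.mem_filter, Finset.mem_univ, true_and]
        exact ⟨⟨i, h.1, hrefl i⟩, ⟨i, h.2, hrefl i⟩⟩
      have := Finset.single_le_sum (f := π) (fun j _ => Nat.zero_le _) hi
      have := hπ i
      omega
    -- Hamming weights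
    have hsupp : (Finset.univ.filter fun i => c i ≠ 0) ⊆
        (Finset.univ.filter fun i => u i ≠ 0) ∪ (Finset.univ.filter fun i => v i ≠ 0) := by
      intro i hi
      simp only [Finset.mem_filter, Finset.mem_union, Finset.mem_univ, true_and] at *
      by_contra h; push_neg at h
      apply hi
      show u i + v i = 0
      rw [h.1, h.2, add_zero]
    have hwHc : 4 ≤ wH c := extHamming_min_wH hc hcne
    have hwHcle : wH c ≤ wH u + wH v := by
      calc wH c ≤ ((Finset.univ.filter fun i => u i ≠ 0) ∪
            (Finset.univ.filter fun i => v i ≠ 0)).card := Finset.card_le_card hsupp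
        _ ≤ wH u + wH v := Finset.card_union_le _ _
    have hwHu2 : wH u ≤ 2 := le_trans (supp_card_le_wtP le hrefl π hπ u) (by omega)
    have hwHv2 : wH v ≤ 2 := le_trans (supp_card_le_wtP le hrefl π hπ v) (by omega)
    have := hcond c hc hwtu.2.2 u v hdisj rfl (by omega) (by omega)
    omega
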